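/- For any forest F on vertex set {1,…,n} and any ε > 0 with εn an integer, there is an ordering (relabeling) of the vertices of F such that every vertex i with i ≤ εn has at most one neighbor among {1,…,i−1}, and every vertex i with i > εn has degree at most 2/ε in F. -/

import Mathlib

open SimpleGraph Finset



lemma path_edge_unique {V : Type*} {G : SimpleGraph V} {u v x y : V} (p : G.Walk u v)
    (hp : p.IsPath) (hx : s(u,x) ∈ p.edges) (hy : s(u,y) ∈ p.edges) : x = y := by
  cases p with
  | nil => simp at hx
  | @cons _ w _ h' p' =>
    rw [SimpleGraph.Walk.cons_isPath_iff] at hp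
    rw [SimpleGraph.Walk.edges_cons, List.mem_cons] at hx hy
    have key : ∀ z : V, s(u,z) = s(u,w) ∨ s(u,z) ∈ p'.edges → z = w := by
      rintro z (hz | hz)
      · exact (Sym2.congr_right.mp hz)
      · exact absurd (p'.fst_mem_support_of_mem_edges hz) hp.2
    rw [key x hx, key y hy]

lemma exists_leaf {V : Type*} [Fintype V] [DecidableEq V] [Nonempty V] (G : SimpleGraph V)
    [DecidableRel G.Adj] (hG : G.IsAcyclic) : ∃ v, G.degree v ≤ 1 := by
  classical
  set P : ℕ → Prop := fun k => ∃ (u v : V) (w : G.Walk u v), w.IsPath ∧ w.length = k with hP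
  have hP0 : P 0 := ⟨Classical.arbitrary V, Classical.arbitrary V, SimpleGraph.Walk.nil, by simp, rfl⟩
  have hPN : P (Nat.findGreatest P (Fintype.card V)) :=
    Nat.findGreatest_spec (Nat.zero_le _) hP0
  set N := Nat.findGreatest P (Fintype.card V) with hN
  obtain ⟨u, v, p, hp, hlen⟩ := hPN
  refine ⟨u, ?_⟩
  by_contra hdeg
  push_neg at hdeg
  have hmaxlen : ∀ (a b : V) (q : G.Walk a b), q.IsPath → q.length ≤ N := by
    intro a b q hq
    by_contra hlt
    push_neg at hlt
    exact Nat.findGreatest_is_greatest hlt (le_of_lt hq.length_lt) ⟨a, b, q, hq, rfl⟩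
  have hsupp : ∀ x, G.Adj u x → x ∈ p.support := by
    intro x hux
    by_contra hxs
    have hpath : (SimpleGraph.Walk.cons hux.symm p).IsPath := hp.cons hxs
    have := hmaxlen _ _ _ hpath
    simp [SimpleGraph.Walk.length_cons, hlen] at this
  have hedge : ∀ x, G.Adj u x → s(u,x) ∈ p.edges := by
    intro x hux
    by_contra he
    have hxs := hsupp x hux
    have hq : (p.takeUntil x hxs).IsPath := hp.takeUntil hxs
    have hcyc : (SimpleGraph.Walk.cons hux (p.takeUntil x hxs).reverse).IsCycle := by
      rw [SimpleGraph.Walk.cons_isCycle_iff]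
      refine ⟨hq.reverse, ?_⟩
      rw [SimpleGraph.Walk.edges_reverse, List.mem_reverse]
      exact fun h => he (p.edges_takeUntil_subset hxs h)
    exact hG _ hcyc
  obtain ⟨x, hx, y, hy, hxy⟩ := Finset.one_lt_card.mp hdeg
  rw [SimpleGraph.mem_neighborFinset] at hx hy
  exact hxy (path_edge_unique p hp (hedge x hx) (hedge y hy))



lemma exists_leaf_finset {n : ℕ} (F : SimpleGraph (Fin n)) [DecidableRel F.Adj]
    (hF : F.IsAcyclic) (T : Finset (Fin n)) (hT : T.Nonempty) :
    ∃ w ∈ T, (F.neighborFinset w ∩ T).card ≤ 1 := by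
  classical
  have : Nonempty {v // v ∈ T} := ⟨⟨hT.choose, hT.choose_spec⟩⟩
  let G : SimpleGraph {v // v ∈ T} := F.comap Subtype.val
  have hGdec : DecidableRel G.Adj := Classical.decRel _
  have hG : G.IsAcyclic := by
    intro v c hc
    let emb : G ↪g F := SimpleGraph.Embedding.comap
      (Function.Embedding.subtype (· ∈ T)) F
    exact hF _ (hc.map emb.injective (f := emb.toHom))
  obtain ⟨w, hw⟩ := exists_leaf G hG
  refine ⟨(w : Fin n), w.2, ?_⟩
  have himg : (G.neighborFinset w).image Subtype.val
      = F.neighborFinset (w : Fin n) ∩ T := by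
    ext v
    simp only [Finset.mem_image, SimpleGraph.mem_neighborFinset, Finset.mem_inter]
    constructor
    · rintro ⟨a, ha, rfl⟩
      exact ⟨ha, a.2⟩
    · rintro ⟨hadj, hv⟩
      exact ⟨⟨v, hv⟩, hadj, rfl⟩
  calc (F.neighborFinset (w : Fin n) ∩ T).card
      = ((G.neighborFinset w).image Subtype.val).card := by rw [himg]
    _ = (G.neighborFinset w).card := Finset.card_image_of_injective _ Subtype.val_injective
    _ ≤ 1 := hw

lemma sum_nbhd_bound {n : ℕ} (F : SimpleGraph (Fin n)) [DecidableRel F.Adj]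
    (hF : F.IsAcyclic) :
    ∀ (T : Finset (Fin n)), T.Nonempty →
      (∑ v ∈ T, (F.neighborFinset v ∩ T).card) + 2 ≤ 2 * T.card := by
  classical
  intro T
  induction T using Finset.strongInduction with
  | _ T ih =>
  intro hT
  obtain ⟨w, hwT, hw1⟩ := exists_leaf_finset F hF T hT
  by_cases hcard : T.card = 1
  · obtain ⟨a, rfl⟩ := Finset.card_eq_one.mp hcard
    have : w = a := Finset.mem_singleton.mp hwT
    subst this
    have : F.neighborFinset w ∩ {w} = ∅ := by
      ext v
      simp only [Finset.mem_inter, SimpleGraph.mem_neighborFinset, Finset.mem_singleton,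
        Finset.notMem_empty, iff_false]
      rintro ⟨hadj, rfl⟩
      exact F.irrefl hadj
    simp [this]
  · set T' := T.erase w with hT'
    have hss : T' ⊂ T := Finset.erase_ssubset hwT
    have hT'card : T'.card = T.card - 1 := Finset.card_erase_of_mem hwT
    have hT2 : 2 ≤ T.card := by
      have := Finset.card_pos.mpr hT
      omega
    have hT'ne : T'.Nonempty := Finset.card_pos.mp (by omega)
    have IH := ih T' hss hT'ne
    -- split sum
    have hsplit : (∑ v ∈ T, (F.neighborFinset v ∩ T).card) =
        (F.neighborFinset w ∩ T).card + ∑ v ∈ T', (F.neighborFinset v ∩ T).card :=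
      (Finset.add_sum_erase T _ hwT).symm
    have hterm : ∀ v ∈ T', (F.neighborFinset v ∩ T).card ≤
        (F.neighborFinset v ∩ T').card + (if v ∈ F.neighborFinset w then 1 else 0) := by
      intro v hv
      have hTins : T = insert w T' := (Finset.insert_erase hwT).symm
      by_cases hadj : v ∈ F.neighborFinset w
      · have hadj' : w ∈ F.neighborFinset v := by
          rw [SimpleGraph.mem_neighborFinset] at hadj ⊢
          exact hadj.symm
        rw [hTins, Finset.inter_comm, Finset.insert_inter_of_mem hadj', if_pos hadj,
          Finset.inter_comm]
        exact le_trans (Finset.card_insert_le _ _) (by simp)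
      · have hadj' : w ∉ F.neighborFinset v := by
          rw [SimpleGraph.mem_neighborFinset] at hadj ⊢
          exact fun h => hadj h.symm
        rw [hTins, Finset.inter_comm, Finset.insert_inter_of_notMem hadj', if_neg hadj,
          Finset.inter_comm]
        simp
    have hsum2 : (∑ v ∈ T', (F.neighborFinset v ∩ T).card) ≤
        (∑ v ∈ T', (F.neighborFinset v ∩ T').card)
        + ∑ v ∈ T', (if v ∈ F.neighborFinset w then 1 else 0) := by
      rw [← Finset.sum_add_distrib]
      exact Finset.sum_le_sum hterm
    have hind : (∑ v ∈ T', (if v ∈ F.neighborFinset w then 1 else 0)) ≤ 1 := by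
      have heq : (∑ v ∈ T', if v ∈ F.neighborFinset w then (1:ℕ) else 0)
          = (T'.filter (· ∈ F.neighborFinset w)).card := by
        rw [← Finset.sum_filter, Finset.card_eq_sum_ones]
      rw [heq]
      calc (T'.filter (· ∈ F.neighborFinset w)).card
          = (F.neighborFinset w ∩ T').card := by
            rw [Finset.filter_mem_eq_inter, Finset.inter_comm]
        _ ≤ (F.neighborFinset w ∩ T).card :=
            Finset.card_le_card (Finset.inter_subset_inter_left (Finset.erase_subset _ _))
        _ ≤ 1 := hw1
    omega



lemma mem_take_iff_indexOf_lt {α : Type*} [DecidableEq α] {L : List α} (nd : L.Nodup) {v : α}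
    (hv : v ∈ L) (i : ℕ) : v ∈ L.take i ↔ L.idxOf v < i := by
  constructor
  · intro h
    obtain ⟨j, hj, hget⟩ := List.getElem_of_mem h
    have hj' : j < i := lt_of_lt_of_le hj (by simp [List.length_take])
    have hjL : j < L.length := by
      have := hj
      simp [List.length_take] at this
      omega
    have : L[j] = v := by rw [← hget, List.getElem_take]
    rw [← this, nd.idxOf_getElem]
    exact hj'
  · intro h
    have hlt : L.idxOf v < L.length := List.idxOf_lt_length_iff.2 hv
    have hlt' : L.idxOf v < (L.take i).length := by
      simp [List.length_take]
      omega
    have : (L.take i)[L.idxOf v] = v := by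
      rw [List.getElem_take, List.getElem_idxOf]
    rw [← this]
    exact List.getElem_mem _


lemma exists_degen_list {n : ℕ} (F : SimpleGraph (Fin n)) [DecidableRel F.Adj]
    (hF : F.IsAcyclic) (T : Finset (Fin n)) :
    ∃ L : List (Fin n), L.Nodup ∧ L.toFinset = T ∧
      ∀ (i : ℕ) (h : i < L.length),
        (F.neighborFinset (L.get ⟨i, h⟩) ∩ (L.take i).toFinset).card ≤ 1 := by
  classical
  induction T using Finset.strongInduction with
  | _ T ih =>
  rcases T.eq_empty_or_nonempty with rfl | hT
  · exact ⟨[], by simp, by simp, by simp⟩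
  obtain ⟨w, hwT, hw1⟩ := exists_leaf_finset F hF T hT
  obtain ⟨L', hnd', htf', hdeg'⟩ := ih (T.erase w) (Finset.erase_ssubset hwT)
  refine ⟨L' ++ [w], ?_, ?_, ?_⟩
  · rw [List.nodup_append]
    refine ⟨hnd', List.nodup_singleton w, ?_⟩
    intro a ha b hb hab
    rw [List.mem_singleton] at hb
    rw [hab, hb] at ha
    have : w ∈ T.erase w := htf' ▸ List.mem_toFinset.mpr ha
    exact Finset.notMem_erase w T this
  · rw [List.toFinset_append, htf']
    simp only [List.toFinset_cons, List.toFinset_nil, LawfulSingleton.insert_empty_eq]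
    rw [Finset.union_comm]
    ext a
    simp only [Finset.mem_union, Finset.mem_singleton, Finset.mem_erase]
    constructor
    · rintro (rfl | ⟨_, h⟩) <;> [exact hwT; exact h]
    · intro haT
      by_cases h : a = w
      · exact Or.inl h
      · exact Or.inr ⟨h, haT⟩
  · intro i h
    rw [List.length_append, List.length_singleton] at h
    by_cases hi : i < L'.length
    · have hget : (L' ++ [w]).get ⟨i, by simp; omega⟩ = L'.get ⟨i, hi⟩ := by
        simp [List.getElem_append_left hi]
      have htake : (L' ++ [w]).take i = L'.take i :=
        List.take_append_of_le_length (le_of_lt hi)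
      rw [hget, htake]
      exact hdeg' i hi
    · have hieq : i = L'.length := by omega
      subst hieq
      have hget : (L' ++ [w]).get ⟨L'.length, by simp⟩ = w := by
        simp
      have htake : (L' ++ [w]).take L'.length = L' := List.take_left
      rw [hget, htake, htf']
      calc (F.neighborFinset w ∩ T.erase w).card
          ≤ (F.neighborFinset w ∩ T).card :=
            Finset.card_le_card (Finset.inter_subset_inter_left (Finset.erase_subset _ _))
        _ ≤ 1 := hw1


/-- For any forest `F` on vertex set `{1, …, n}` and `ε > 0` with `εn` an integer, there is a
relabeling `σ` of the vertices such that every vertex `i` with `i ≤ εn` has at most one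
neighbor among the earlier vertices, and every vertex `i` with `i > εn` has degree at
most `2/ε` in `F`. (Vertex `i ∈ {1, …, n}` corresponds to the index `i − 1` in `Fin n`,
and the vertex relabeled `i` is `σ i`.) -/
theorem forest_good_ordering (n : ℕ) (F : SimpleGraph (Fin n)) [DecidableRel F.Adj]
    (hF : F.IsAcyclic) (ε : ℝ) (hε : 0 < ε) (m : ℕ) (hm : (m : ℝ) = ε * n) :
    ∃ σ : Equiv.Perm (Fin n),
      (∀ i : Fin n, ((i : ℕ) + 1 : ℝ) ≤ ε * n →
        ((F.neighborFinset (σ i)).filter (fun v => σ.symm v < i)).card ≤ 1)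
      ∧ (∀ i : Fin n, ε * n < ((i : ℕ) + 1 : ℝ) → (F.degree (σ i) : ℝ) ≤ 2 / ε) := by
  classical
  set Bset : Finset (Fin n) := Finset.univ.filter (fun v => (2/ε : ℝ) < F.degree v) with hBdef
  have hBn : Bset.card ≤ n := le_trans (Finset.card_filter_le _ _) (by simp)
  have hBm : Bset.card ≤ m := by
    rcases Bset.eq_empty_or_nonempty with hB | hBne
    · simp [hB]
    · have hn : 0 < n := by
        obtain ⟨v, _⟩ := hBne
        exact v.pos
      have huniv : (Finset.univ : Finset (Fin n)).Nonempty := ⟨⟨0, hn⟩, Finset.mem_univ _⟩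
      have hsum := sum_nbhd_bound F hF Finset.univ huniv
      have hsum' : (∑ v : Fin n, F.degree v) + 2 ≤ 2 * n := by
        have heq : ∀ v : Fin n, (F.neighborFinset v ∩ Finset.univ).card = F.degree v := by
          intro v
          rw [Finset.inter_univ]
          rfl
        rw [Finset.sum_congr rfl (fun v _ => heq v)] at hsum
        simpa using hsum
      have h1 : (2/ε) * Bset.card < (∑ v : Fin n, (F.degree v : ℝ)) := by
        have hlt : (∑ _v ∈ Bset, (2/ε : ℝ)) < ∑ v ∈ Bset, (F.degree v : ℝ) :=
          Finset.sum_lt_sum_of_nonempty hBne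
            (fun v hv => (Finset.mem_filter.mp hv).2)
        have hle : (∑ v ∈ Bset, (F.degree v : ℝ)) ≤ ∑ v : Fin n, (F.degree v : ℝ) :=
          Finset.sum_le_sum_of_subset_of_nonneg (Finset.subset_univ _)
            (fun v _ _ => Nat.cast_nonneg _)
        rw [Finset.sum_const, nsmul_eq_mul, mul_comm] at hlt
        exact lt_of_lt_of_le hlt hle
      have h2 : (∑ v : Fin n, (F.degree v : ℝ)) ≤ 2 * n - 2 := by
        have : ((∑ v : Fin n, F.degree v : ℕ) : ℝ) + 2 ≤ 2 * n := by
          exact_mod_cast Nat.cast_le.mpr hsum'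
        push_cast at this ⊢
        linarith
      have h3 : (2/ε) * Bset.card < 2 * n := by linarith
      have h4 : (Bset.card : ℝ) < m := by
        rw [hm]
        rw [div_mul_eq_mul_div, div_lt_iff₀ hε] at h3
        nlinarith
      exact le_of_lt (by exact_mod_cast h4)
  obtain ⟨T, hBT, hTcard⟩ := Finset.exists_superset_card_eq (le_min hBm hBn)
    (by simp [min_le_right m n])
  obtain ⟨L₁, hnd₁, htf₁, hdeg₁⟩ := exists_degen_list F hF T
  set L₂ := (Tᶜ : Finset (Fin n)).toList with hL₂def
  set L := L₁ ++ L₂ with hLdef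
  have hL1len : L₁.length = min m n := by
    rw [← List.toFinset_card_of_nodup hnd₁, htf₁, hTcard]
  have hmemT : ∀ v, v ∈ L₁ ↔ v ∈ T := by
    intro v
    rw [← htf₁, List.mem_toFinset]
  have hmemT' : ∀ v, v ∈ L₂ ↔ v ∉ T := by
    intro v
    rw [hL₂def, Finset.mem_toList, Finset.mem_compl]
  have hnd : L.Nodup := by
    rw [hLdef, List.nodup_append]
    exact ⟨hnd₁, Finset.nodup_toList _, fun a ha b hb hab => ((hmemT' a).mp (hab ▸ hb)) ((hmemT a).mp ha)⟩
  have hmem : ∀ v : Fin n, v ∈ L := by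
    intro v
    rw [hLdef, List.mem_append, hmemT, hmemT']
    exact em _
  have hlen : L.length = n := by
    rw [← List.toFinset_card_of_nodup hnd]
    have : L.toFinset = Finset.univ := by
      ext v
      simp [List.mem_toFinset, hmem v]
    rw [this]
    simp
  set e := List.Nodup.getEquivOfForallMemList L hnd hmem with hedef
  set σ : Equiv.Perm (Fin n) := (finCongr hlen.symm).trans e with hσdef
  have hσval : ∀ (i : Fin n) (h : (i : ℕ) < L.length), σ i = L.get ⟨i, h⟩ := by
    intro i h
    rfl
  have hσsymmval : ∀ v : Fin n, ((σ.symm v : Fin n) : ℕ) = L.idxOf v := by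
    intro v
    rfl
  refine ⟨σ, ?_, ?_⟩
  · intro i hi
    have him : (i : ℕ) < min m n := by
      have h1 : ((i : ℕ) + 1 : ℝ) ≤ (m : ℝ) := by rw [hm]; exact hi
      have h2 : (i : ℕ) + 1 ≤ m := by exact_mod_cast h1
      have h3 : (i : ℕ) < n := i.isLt
      omega
    have hiL1 : (i : ℕ) < L₁.length := by omega
    have hiL : (i : ℕ) < L.length := by rw [hlen]; exact i.isLt
    have hclaim : (F.neighborFinset (σ i)).filter (fun v => σ.symm v < i)
        = F.neighborFinset (L.get ⟨i, hiL⟩) ∩ (L.take i).toFinset := by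
      ext v
      rw [Finset.mem_filter, Finset.mem_inter, List.mem_toFinset, hσval i hiL,
        mem_take_iff_indexOf_lt hnd (hmem v) i]
      refine and_congr_right fun _ => ?_
      rw [Fin.lt_def, hσsymmval v]
    rw [hclaim]
    have hget : L.get ⟨(i : ℕ), hiL⟩ = L₁.get ⟨(i : ℕ), hiL1⟩ := by
      simp only [hLdef, List.get_eq_getElem]
      exact List.getElem_append_left hiL1
    have htake : L.take i = L₁.take i := by
      rw [hLdef]
      exact List.take_append_of_le_length (le_of_lt hiL1)
    rw [hget, htake]
    exact hdeg₁ i hiL1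
  · intro i hi
    have him : L₁.length ≤ (i : ℕ) := by
      have h1 : (m : ℝ) < ((i : ℕ) + 1 : ℝ) := by rw [hm]; exact hi
      have h2 : m < (i : ℕ) + 1 := by exact_mod_cast h1
      omega
    have hiL : (i : ℕ) < L.length := by rw [hlen]; exact i.isLt
    have hiL2 : (i : ℕ) - L₁.length < L₂.length := by
      rw [hLdef, List.length_append] at hiL
      omega
    have hmem2 : σ i ∈ L₂ := by
      rw [hσval i hiL]
      simp only [hLdef, List.get_eq_getElem]
      rw [List.getElem_append_right him]
      exact List.getElem_mem _
    have hnotT : σ i ∉ T := (hmemT' _).mp hmem2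
    have hnotB : σ i ∉ Bset := fun h => hnotT (hBT h)
    rw [hBdef, Finset.mem_filter] at hnotB
    push_neg at hnotB
    exact hnotB (Finset.mem_univ _)
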